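/- For every f in the Catalan monoid C_{n+1}, if one sets Y = f([n+1]) \ {n+1} and X = {i ∈ f^{-1}(Y) : i = max f^{-1}(f(i))} (so X consists of the maximum element of each fiber of f except the fiber of n+1), then X ≤ Y in P_n and f = f_{X,Y}. -/

import Mathlib

/-- `X ≤ Y` in the poset `Pₙ`: writing `X = {x₁ < ⋯ < x_k}` and `Y = {y₁ < ⋯ < y_l}`,
we require `k = l` and `xᵢ ≤ yᵢ` for all `i` (encoded via `List.Forall₂` on the
sorted enumerations, which forces in particular `|X| = |Y|`). -/
def Ple {α : Type*} [LinearOrder α] (X Y : Finset α) : Prop :=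
  List.Forall₂ (· ≤ ·) (X.sort (· ≤ ·)) (Y.sort (· ≤ ·))

/-- The map `f_{X,Y} : [n+1] → [n+1]` (with `[n+1]` modelled as `Fin (n+1)` and
`[n] ⊆ [n+1]` as the finsets avoiding `Fin.last n`).  Writing `X = {x₁ < ⋯ < x_k}` and
`Y = {y₁ < ⋯ < y_k}`, we have `f_{X,Y}(i) = y₁` for `i ≤ x₁`, `f_{X,Y}(i) = y_j` for
`x_{j-1} < i ≤ x_j`, and `f_{X,Y}(i) = n+1` for `i > x_k`: indeed, the number `c` of
elements of `X` that are `< i` equals `j - 1` exactly when `x_{j-1} < i ≤ x_j`, and the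
`(c+1)`-st smallest element of `Y` is produced when `c < |Y|`. -/
def fXY {n : ℕ} (X Y : Finset (Fin (n+1))) (i : Fin (n+1)) : Fin (n+1) :=
  if h : (X.filter (fun x => x < i)).card < (Y.sort (· ≤ ·)).length then
    (Y.sort (· ≤ ·)).get ⟨(X.filter (fun x => x < i)).card, h⟩
  else Fin.last n

/-- Auxiliary: in a strictly sorted list, the number of entries smaller than the `k`-th
entry equals `k`. -/
theorem length_filter_lt_get_sorted {α : Type*} [LinearOrder α] (l : List α)
    (hl : l.Pairwise (· < ·)) (k : ℕ) (hk : k < l.length) :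
    (l.filter (fun x => decide (x < l.get ⟨k, hk⟩))).length = k := by
  induction l generalizing k with
  | nil => simp at hk
  | cons a t ih =>
    obtain ⟨ha, ht⟩ := List.pairwise_cons.mp hl
    cases k with
    | zero =>
      have h0 : List.filter (fun x => decide (x < (a :: t).get ⟨0, hk⟩)) (a :: t) = [] := by
        rw [List.filter_eq_nil_iff]
        intro x hx
        rcases List.mem_cons.mp hx with rfl | hx
        · simp
        · simp only [List.get, decide_eq_true_eq, not_lt]
          exact (ha x hx).le
      rw [h0]; rfl
    | succ j =>
      have hj : j < t.length := by simpa using hk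
      have hg : (a :: t).get ⟨j+1, hk⟩ = t.get ⟨j, hj⟩ := rfl
      have hlt : a < t.get ⟨j, hj⟩ := ha _ (List.get_mem _ _)
      rw [hg, List.filter_cons, if_pos (by simpa using hlt), List.length_cons, ih ht j hj]

/-- Auxiliary: the cardinality of a `Finset.filter` is the length of the filtered sorted
enumeration. -/
theorem card_filter_eq_length_filter_sort {α : Type*} [LinearOrder α] (s : Finset α)
    (a : α) :
    (s.filter (fun x => x < a)).card
      = ((s.sort (· ≤ ·)).filter (fun x => decide (x < a))).length := by
  rw [Finset.card, Finset.filter_val, ← Finset.sort_eq (s := s) (· ≤ ·), Multiset.filter_coe,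
    Multiset.coe_card]

/-- Auxiliary: the `c`-th entry of the sorted enumeration of `s` is `a`, provided `a ∈ s`
and `c` is the number of elements of `s` smaller than `a`. -/
theorem sort_get_of_mem {α : Type*} [LinearOrder α] {s : Finset α} {a : α} (ha : a ∈ s)
    {c : ℕ} (hc : c = (s.filter (fun x => x < a)).card)
    (h : c < (s.sort (· ≤ ·)).length) :
    (s.sort (· ≤ ·)).get ⟨c, h⟩ = a := by
  obtain ⟨⟨k, hk⟩, hgk⟩ := List.mem_iff_get.mp ((Finset.mem_sort (· ≤ ·)).mpr ha)
  have hcount := length_filter_lt_get_sorted (s.sort (· ≤ ·))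
    (Finset.sortedLT_sort s).pairwise k hk
  rw [hgk] at hcount
  have hck : c = k := by
    rw [hc, card_filter_eq_length_filter_sort, hcount]
  subst hck
  exact hgk

/-- For `f ∈ C_{n+1}`, setting `Y = f([n+1]) \ {n+1}` and
`X = {i ∈ f⁻¹(Y) : i = max f⁻¹(f(i))}`, we have `X ≤ Y` in `Pₙ` and `f = f_{X,Y}`. -/
theorem eq_fXY_of_mem_catalan (n : ℕ) (f : Fin (n+1) → Fin (n+1))
    (hmono : Monotone f) (hincr : ∀ i, i ≤ f i)
    (Y X : Finset (Fin (n+1)))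
    (hYdef : Y = (Finset.univ.image f).erase (Fin.last n))
    (hXdef : X = Finset.univ.filter (fun i => f i ∈ Y ∧ ∀ j, f j = f i → j ≤ i)) :
    Fin.last n ∉ X ∧ Fin.last n ∉ Y ∧ Ple X Y ∧ f = fXY X Y := by
  have hXmem : ∀ x, x ∈ X ↔ f x ∈ Y ∧ ∀ j, f j = f x → j ≤ x := by
    intro x; rw [hXdef]; simp
  have hlastY : Fin.last n ∉ Y := hYdef ▸ Finset.notMem_erase _ _
  have hlastX : Fin.last n ∉ X := by
    intro h
    have h1 := ((hXmem _).1 h).1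
    have h2 : f (Fin.last n) = Fin.last n := le_antisymm (Fin.le_last _) (hincr _)
    rw [h2] at h1; exact hlastY h1
  have hXY : ∀ x ∈ X, f x ∈ Y := fun x hx => ((hXmem x).1 hx).1
  have hmax : ∀ x ∈ X, ∀ j, f j = f x → j ≤ x := fun x hx => ((hXmem x).1 hx).2
  have hstrict : ∀ x ∈ X, ∀ z, x < z → f x < f z := by
    intro x hx z hxz
    rcases lt_or_eq_of_le (hmono hxz.le) with h | h
    · exact h
    · exact absurd (hmax x hx z h.symm) (not_le.mpr hxz)
  have hinj : ∀ x₁ ∈ X, ∀ x₂ ∈ X, f x₁ = f x₂ → x₁ = x₂ := by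
    intro x₁ h₁ x₂ h₂ he
    rcases lt_trichotomy x₁ x₂ with h | h | h
    · exact absurd he (hstrict x₁ h₁ x₂ h).ne
    · exact h
    · exact absurd he.symm (hstrict x₂ h₂ x₁ h).ne
  have hsurj : ∀ y ∈ Y, ∃ x ∈ X, f x = y := by
    intro y hy
    have hy' : ∃ a, f a = y := by
      rw [hYdef] at hy
      obtain ⟨-, hy2⟩ := Finset.mem_erase.mp hy
      simpa using hy2
    obtain ⟨a, ha⟩ := hy'
    set S : Finset (Fin (n+1)) := Finset.univ.filter (fun j => f j = y) with hS
    have hSne : S.Nonempty := ⟨a, by simp [hS, ha]⟩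
    refine ⟨S.max' hSne, ?_, ?_⟩
    · have hfx : f (S.max' hSne) = y := by
        have := S.max'_mem hSne
        simp [hS] at this
        exact this
      rw [hXmem]
      refine ⟨by rw [hfx]; exact hy, ?_⟩
      intro j hj
      rw [hfx] at hj
      exact S.le_max' j (by simp [hS, hj])
    · have := S.max'_mem hSne
      simp [hS] at this
      exact this
  have hcard : ∀ i, (X.filter (fun x => x < i)).card
      = (Y.filter (fun y => y < f i)).card := by
    intro i
    apply Finset.card_bij (fun x _ => f x)
    · intro a ha
      obtain ⟨ha1, ha2⟩ := Finset.mem_filter.mp ha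
      exact Finset.mem_filter.mpr ⟨hXY a ha1, hstrict a ha1 i ha2⟩
    · intro a ha b hb he
      exact hinj a (Finset.mem_filter.mp ha).1 b (Finset.mem_filter.mp hb).1 he
    · intro y hy
      obtain ⟨hy1, hy2⟩ := Finset.mem_filter.mp hy
      obtain ⟨x, hx, hfx⟩ := hsurj y hy1
      have hxi : x < i := by
        by_contra h
        exact absurd (hfx ▸ hmono (not_lt.mp h)) (not_le.mpr hy2)
      exact ⟨x, Finset.mem_filter.mpr ⟨hx, hxi⟩, hfx⟩
  have hmapsort : (X.sort (· ≤ ·)).map f = Y.sort (· ≤ ·) := by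
    refine (fun hp h1 h2 => List.Perm.eq_of_pairwise' (r := (· ≤ ·)) h1 h2 hp) ?_ ?_ ?_
    · apply List.perm_of_nodup_nodup_toFinset_eq
      · exact List.Nodup.map_on
          (fun x hx y hy he => hinj x (by simpa using hx) y (by simpa using hy) he)
          (Finset.sort_nodup _ _)
      · exact Finset.sort_nodup _ _
      · ext y
        simp only [List.mem_toFinset, List.mem_map, Finset.mem_sort, Finset.sort_toFinset]
        constructor
        · rintro ⟨x, hx, rfl⟩; exact hXY x hx
        · intro hy; obtain ⟨x, hx, hfx⟩ := hsurj y hy; exact ⟨x, hx, hfx⟩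
    · exact List.Pairwise.map f (fun a b h => hmono h) (Finset.pairwise_sort _ _)
    · exact Finset.pairwise_sort _ _
  have hPle : Ple X Y := by
    unfold Ple
    rw [← hmapsort, List.forall₂_map_right_iff]
    exact List.forall₂_same.mpr (fun x _ => hincr x)
  refine ⟨hlastX, hlastY, hPle, ?_⟩
  funext i
  unfold fXY
  by_cases hfi : f i ∈ Y
  · have hYlength : (Y.filter (fun y => y < f i)).card < (Y.sort (· ≤ ·)).length := by
      rw [Finset.length_sort]
      exact Finset.card_lt_card
        (Finset.filter_ssubset.mpr ⟨f i, hfi, by simp⟩)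
    have h : (X.filter (fun x => x < i)).card < (Y.sort (· ≤ ·)).length :=
      (hcard i) ▸ hYlength
    rw [dif_pos h]
    exact (sort_get_of_mem hfi (hcard i) h).symm
  · have hfl : f i = Fin.last n := by
      by_contra h
      refine hfi ?_
      rw [hYdef]
      exact Finset.mem_erase.mpr ⟨h, Finset.mem_image.mpr ⟨i, Finset.mem_univ i, rfl⟩⟩
    have hfilterY : Y.filter (fun y => y < f i) = Y := by
      rw [hfl]
      apply Finset.filter_true_of_mem
      intro y hy
      exact lt_of_le_of_ne (Fin.le_last y) (fun h => hlastY (h ▸ hy))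
    have hc : (X.filter (fun x => x < i)).card = Y.card := by
      rw [hcard i, hfilterY]
    rw [dif_neg (by rw [hc, Finset.length_sort]; exact lt_irrefl _), hfl]
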